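/- The polynomials H₁(x,y,z) = xz − y² and H₂(x,y,z) = yz − y² are both first integrals of the system ẋ = 2xy − xz − 2y², ẏ = −yz, ż = −2yz + z² on ℝ³, and they are functionally independent. -/

import Mathlib

/-- Gradient of a function of three real variables, via partial derivatives. -/
noncomputable def grad3 (H : ℝ → ℝ → ℝ → ℝ) (x y z : ℝ) : Fin 3 → ℝ :=
  ![deriv (fun t => H t y z) x, deriv (fun t => H x t z) y, deriv (fun t => H x y t) z]

theorem stmt14 :
    (∀ x y z : ℝ,
      deriv (fun t => t * z - y ^ 2) x * (2 * x * y - x * z - 2 * y ^ 2) +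
        deriv (fun t => x * z - t ^ 2) y * (-y * z) +
        deriv (fun t => x * t - y ^ 2) z * (-2 * y * z + z ^ 2) = 0) ∧
    (∀ x y z : ℝ,
      deriv (fun _ : ℝ => y * z - y ^ 2) x * (2 * x * y - x * z - 2 * y ^ 2) +
        deriv (fun t => t * z - t ^ 2) y * (-y * z) +
        deriv (fun t => y * t - y ^ 2) z * (-2 * y * z + z ^ 2) = 0) ∧
    (∃ S : Set (ℝ × ℝ × ℝ), IsOpen S ∧ Dense S ∧
      ∀ p ∈ S, LinearIndependent ℝ
        ![grad3 (fun x y z => x * z - y ^ 2) p.1 p.2.1 p.2.2,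
          grad3 (fun _ y z => y * z - y ^ 2) p.1 p.2.1 p.2.2]) := by
  have d1 : ∀ y z : ℝ, ∀ x : ℝ, deriv (fun t : ℝ => t * z - y ^ 2) x = z := by
    intro y z x
    have : HasDerivAt (fun t : ℝ => t * z - y ^ 2) z x := by
      simpa using ((hasDerivAt_id x).mul_const z).sub_const (y ^ 2)
    exact this.deriv
  have d2 : ∀ x z : ℝ, ∀ y : ℝ, deriv (fun t : ℝ => x * z - t ^ 2) y = -2 * y := by
    intro x z y
    have : HasDerivAt (fun t : ℝ => x * z - t ^ 2) (-2 * y) y := by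
      have := (hasDerivAt_pow 2 y).const_sub (x * z)
      simpa [mul_comm] using this
    exact this.deriv
  have d3 : ∀ x y : ℝ, ∀ z : ℝ, deriv (fun t : ℝ => x * t - y ^ 2) z = x := by
    intro x y z
    have : HasDerivAt (fun t : ℝ => x * t - y ^ 2) x z := by
      simpa using ((hasDerivAt_id z).const_mul x).sub_const (y ^ 2)
    exact this.deriv
  have d4 : ∀ z : ℝ, ∀ y : ℝ, deriv (fun t : ℝ => t * z - t ^ 2) y = z - 2 * y := by
    intro z y
    have : HasDerivAt (fun t : ℝ => t * z - t ^ 2) (z - 2 * y) y := by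
      have := ((hasDerivAt_id y).mul_const z).sub (hasDerivAt_pow 2 y)
      simpa [mul_comm, Pi.sub_def] using this
    exact this.deriv
  have d5 : ∀ y : ℝ, ∀ z : ℝ, deriv (fun t : ℝ => y * t - y ^ 2) z = y := by
    intro y z
    have : HasDerivAt (fun t : ℝ => y * t - y ^ 2) y z := by
      simpa using ((hasDerivAt_id z).const_mul y).sub_const (y ^ 2)
    exact this.deriv
  refine ⟨fun x y z => ?_, fun x y z => ?_, ?_⟩
  · rw [d1, d2, d3]; ring
  · rw [d4, d5, deriv_const]; ring
  · refine ⟨{p : ℝ × ℝ × ℝ | p.2.1 ≠ 0 ∧ p.2.2 ≠ 0}, ?_, ?_, ?_⟩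
    · have : {p : ℝ × ℝ × ℝ | p.2.1 ≠ 0 ∧ p.2.2 ≠ 0} =
        (Set.univ : Set ℝ) ×ˢ (({0}ᶜ : Set ℝ) ×ˢ ({0}ᶜ : Set ℝ)) := by
        ext p; simp [Set.mem_prod]
      rw [this]
      exact isOpen_univ.prod (isOpen_compl_singleton.prod isOpen_compl_singleton)
    · have : {p : ℝ × ℝ × ℝ | p.2.1 ≠ 0 ∧ p.2.2 ≠ 0} =
        (Set.univ : Set ℝ) ×ˢ (({0}ᶜ : Set ℝ) ×ˢ ({0}ᶜ : Set ℝ)) := by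
        ext p; simp [Set.mem_prod]
      rw [this]
      exact dense_univ.prod ((dense_compl_singleton 0).prod (dense_compl_singleton 0))
    · rintro ⟨x, y, z⟩ ⟨hy, hz⟩
      have hv : grad3 (fun x y z => x * z - y ^ 2) x y z = ![z, -2 * y, x] := by
        simp only [grad3, d1, d2, d3]
      have hw : grad3 (fun _ y z => y * z - y ^ 2) x y z = ![0, z - 2 * y, y] := by
        simp only [grad3, d4, d5, deriv_const]
      rw [hv, hw]
      rw [linearIndependent_fin2]
      constructor
      · intro h
        have := congrFun h 2
        simp at this
        exact hy this
      · intro a h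
        have := congrFun h 0
        simp at this
        exact hz this.symm
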